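/- Let T be a torus with a finite-order automorphism σ. If σ permutes a basis of the character lattice X(T), then the fixed-point subgroup T^σ is connected. -/

import Mathlib

/-! Torus model: `T = Hom(X, kˣ)` with `X` the character lattice; a finite-order
automorphism `σ` of `X` acts on points by precomposition.  Connectedness of the fixed
subgroup `T^σ` means that it coincides with its identity component, i.e. that it is a
divisible group. -/

abbrev TorusPts (X : Type*) [AddCommGroup X] (k : Type*) [Field k] :=
  X →+ Additive kˣ

def precomp {X : Type*} [AddCommGroup X] (k : Type*) [Field k] (f : X →+ X) :
    TorusPts X k →+ TorusPts X k where
  toFun t := t.comp f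
  map_zero' := by ext x; simp
  map_add' t s := by ext x; simp

def fixedSub {X : Type*} [AddCommGroup X] (k : Type*) [Field k] (σ : X →+ X) :
    AddSubgroup (TorusPts X k) :=
  AddMonoidHom.ker (precomp k σ - AddMonoidHom.id _)

/-- Let `T` be a torus with a finite-order automorphism `σ`.  If `σ`
permutes a basis of the character lattice `X(T)`, then the fixed-point subgroup `T^σ`
is connected (equivalently, divisible). -/
private def intLinear {X Y : Type*} [AddCommGroup X] [AddCommGroup Y]
    [Module ℤ X] [Module ℤ Y] (g : X →+ Y) : X →ₗ[ℤ] Y where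
  toFun := g
  map_add' := map_add g
  map_smul' := fun c x => by
    have h := map_intCast_smul g ℤ ℤ c x
    rw [Int.cast_id] at h
    simpa using h

theorem fixedSub_connected_of_permutes_basis
    {k : Type*} [Field k] [IsAlgClosed k]
    {X : Type*} [AddCommGroup X] [Module ℤ X] [Module.Free ℤ X] [Module.Finite ℤ X]
    (σ : AddAut X) (n : ℕ) (hn : 0 < n) (hord : addOrderOf σ = n)
    {ι : Type*} (b : Module.Basis ι ℤ X) (e : Equiv.Perm ι)
    (hperm : ∀ i, σ (b i) = b (e i)) :
    ∀ t ∈ fixedSub k ((σ : AddAut X) : X →+ X), ∀ m : ℕ, 0 < m →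
      ∃ s ∈ fixedSub k ((σ : AddAut X) : X →+ X), m • s = t := by
  intro t ht m hm
  -- the fixed-point property of `t`
  have hker : t.comp ((σ : AddAut X) : X →+ X) - t = 0 := ht
  have hfix : ∀ x : X, t (σ x) = t x := by
    intro x
    have h2 := DFunLike.congr_fun hker x
    simpa [sub_eq_zero] using h2
  have hstep : ∀ i : ι, t (b (e i)) = t (b i) := by
    intro i; rw [← hperm]; exact hfix (b i)
  have hz : ∀ (p : ℤ) (i : ι), t (b ((e ^ p) i)) = t (b i) := by
    intro p
    induction p using Int.induction_on with
    | zero => simp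
    | succ q ih =>
      intro i
      have h3 : (e ^ ((q : ℤ) + 1)) i = (e ^ (q : ℤ)) (e i) := by
        rw [zpow_add_one]; rfl
      rw [h3, ih (e i), hstep]
    | pred q ih =>
      intro i
      have h1 : (e ^ (-(q : ℤ) - 1)) i = (e ^ (-(q : ℤ))) (e⁻¹ i) := by
        rw [zpow_sub_one]; rfl
      have h2 := hstep (e⁻¹ i)
      rw [show e (e⁻¹ i) = i from e.apply_symm_apply i] at h2
      rw [h1, ih (e⁻¹ i), ← h2]
  -- orbit equivalence relation
  let sd : Setoid ι :=
    ⟨fun i j => ∃ p : ℤ, (e ^ p) i = j, by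
      refine ⟨fun i => ⟨0, rfl⟩, ?_, ?_⟩
      · rintro i j ⟨p, rfl⟩
        exact ⟨-p, by rw [← Equiv.Perm.mul_apply, ← zpow_add, neg_add_cancel, zpow_zero,
          Equiv.Perm.one_apply]⟩
      · rintro i j l ⟨p, rfl⟩ ⟨q, rfl⟩
        exact ⟨q + p, by rw [zpow_add, Equiv.Perm.mul_apply]⟩⟩
  let rep : ι → ι := fun i => (Quotient.mk sd i).out
  have hrel : ∀ i, ∃ p : ℤ, (e ^ p) (rep i) = i := fun i =>
    Quotient.exact (Quotient.out_eq (Quotient.mk sd i))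
  have hrep : ∀ i, t (b (rep i)) = t (b i) := by
    intro i
    obtain ⟨p, hp⟩ := hrel i
    conv_rhs => rw [← hp]
    exact (hz p (rep i)).symm
  have hrep_e : ∀ i, rep (e i) = rep i := by
    intro i
    have h4 : Quotient.mk sd (e i) = Quotient.mk sd i :=
      (Quotient.sound ⟨-1, by
        rw [zpow_neg_one]; exact e.symm_apply_apply i⟩)
    simpa [rep] using congrArg Quotient.out h4
  -- choose m-th roots
  have hroot : ∀ j : ι, ∃ z : kˣ, z ^ m = Additive.toMul (t (b j)) := by
    intro j
    obtain ⟨z, hzm⟩ := IsAlgClosed.exists_pow_nat_eq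
      ((Additive.toMul (t (b j)) : kˣ) : k) hm
    have hz0 : z ≠ 0 := by
      intro h
      rw [h, zero_pow hm.ne'] at hzm
      exact Units.ne_zero _ hzm.symm
    refine ⟨Units.mk0 z hz0, Units.ext ?_⟩
    simpa using hzm
  choose f hf using hroot
  set r : ι → kˣ := fun i => f (rep i) with hr
  have hrm : ∀ i, r i ^ m = Additive.toMul (t (b i)) := by
    intro i
    rw [hr]
    simp only []
    rw [hf (rep i), hrep]
  have hre : ∀ i, r (e i) = r i := by
    intro i; simp only [hr, hrep_e]
  set s0 : X →ₗ[ℤ] Additive kˣ := b.constr ℤ (fun i => Additive.ofMul (r i)) with hs0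
  set s : TorusPts X k := s0.toAddMonoidHom with hs
  let σlin : X →ₗ[ℤ] X := intLinear ((σ : AddAut X) : X →+ X)
  let tlin : X →ₗ[ℤ] Additive kˣ := intLinear t
  have hsb : ∀ i, s (b i) = Additive.ofMul (r i) := by
    intro i
    simp [hs, hs0, Module.Basis.constr_basis]
  have hsfix : ∀ x : X, s (σ x) = s x := by
    have heq : s0 ∘ₗ σlin = s0 := by
      refine b.ext fun i => ?_
      simp only [LinearMap.comp_apply]
      show s0 (σ (b i)) = s0 (b i)
      rw [hperm]
      simp [hs0, Module.Basis.constr_basis, hre]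
    intro x
    have h5 := LinearMap.congr_fun heq x
    exact h5
  refine ⟨s, ?_, ?_⟩
  · show s.comp ((σ : AddAut X) : X →+ X) - s = 0
    ext x
    simp [sub_eq_zero, hsfix x]
  · have heq : (m : ℤ) • s0 = tlin := by
      refine b.ext fun i => ?_
      simp only [LinearMap.smul_apply]
      show (m : ℤ) • s0 (b i) = t (b i)
      rw [hs0, Module.Basis.constr_basis]
      apply Additive.toMul.injective
      rw [← hrm i]
      simp [zpow_natCast]
    ext x : 1
    have h6 := LinearMap.congr_fun heq x
    simp only [LinearMap.smul_apply] at h6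
    show m • s x = t x
    rw [← natCast_zsmul]
    exact h6
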